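/- For q ∈ (0,1), integer m ≥ 1, and 0 ≤ a < b ≤ 1, the function u^{a,b}(x,t) defined on ℝ × (0,∞) by: a if x ≤ 0; a + (m/(q^(1/m)(m+1)^((m+1)/m)))·(x^(m+1)/t)^(1/m) if 0 ≤ (x^(m+1)/t)^(1/m) ≤ (b−a)·q^(1/m)·(m+1)^((m+1)/m)/m; and b otherwise, equals the Hopf-Lax infimum inf_{y∈ℝ} { a·1{y≤0} + b·1{y>0} + t·H*((x−y)/t) } where H*(p) = q^(−1/m)|p|^((m+1)/m)·m/(m+1)^((m+1)/m). -/

import Mathlib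

lemma key_eq (q : ℝ) (hq0 : 0 < q) (m : ℕ) (hm : 1 ≤ m) (x t : ℝ) (hx : 0 < x) (ht : 0 < t) :
    t * (q ^ (-(1 : ℝ) / m) * |x / t| ^ (((m : ℝ) + 1) / m) * m /
        ((m : ℝ) + 1) ^ (((m : ℝ) + 1) / m))
      = ((m : ℝ) / (q ^ ((1 : ℝ) / m) * ((m : ℝ) + 1) ^ (((m : ℝ) + 1) / m))) *
          (x ^ (m + 1) / t) ^ ((1 : ℝ) / m) := by
  have hm0 : (0:ℝ) < m := by positivity
  have hm0' : (m:ℝ) ≠ 0 := hm0.ne'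
  have habs : |x / t| = x / t := abs_of_pos (by positivity)
  have hα : ((m : ℝ) + 1) / m = 1 + 1/m := by field_simp
  have h1 : (x ^ (m+1) / t) ^ ((1:ℝ)/m)
      = x ^ (((m:ℝ)+1)/m) / t ^ ((1:ℝ)/m) := by
    rw [Real.div_rpow (by positivity) ht.le, ← Real.rpow_natCast x (m+1),
      ← Real.rpow_mul hx.le]
    push_cast
    ring_nf
  rw [habs, h1, Real.div_rpow hx.le ht.le, hα, Real.rpow_add ht, Real.rpow_one,
    neg_div, Real.rpow_neg hq0.le]
  have h2 : (0:ℝ) < q ^ ((1:ℝ)/m) := Real.rpow_pos_of_pos hq0 _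
  have h3 : (0:ℝ) < ((m:ℝ)+1) ^ (1 + 1/(m:ℝ)) := Real.rpow_pos_of_pos (by positivity) _
  have h4 : (0:ℝ) < t ^ ((1:ℝ)/m) := Real.rpow_pos_of_pos ht _
  field_simp

theorem stmt11 (q : ℝ) (hq0 : 0 < q) (hq1 : q < 1) (m : ℕ) (hm : 1 ≤ m)
    (a b : ℝ) (ha : 0 ≤ a) (hab : a < b) (hb : b ≤ 1) (x t : ℝ) (ht : 0 < t) :
    IsGLB
      (Set.range fun y : ℝ =>
        (if y ≤ 0 then a else b) +
          t * (q ^ (-(1 : ℝ) / m) * |(x - y) / t| ^ (((m : ℝ) + 1) / m) * m /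
            ((m : ℝ) + 1) ^ (((m : ℝ) + 1) / m)))
      (if x ≤ 0 then a
        else if (x ^ (m + 1) / t) ^ ((1 : ℝ) / m) ≤
            (b - a) * q ^ ((1 : ℝ) / m) * ((m : ℝ) + 1) ^ (((m : ℝ) + 1) / m) / m then
          a + ((m : ℝ) / (q ^ ((1 : ℝ) / m) * ((m : ℝ) + 1) ^ (((m : ℝ) + 1) / m))) *
            (x ^ (m + 1) / t) ^ ((1 : ℝ) / m)
        else b) := by
  have hm0 : (0:ℝ) < m := by positivity
  set α : ℝ := ((m : ℝ) + 1) / m with hαdef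
  have hα_pos : 0 < α := by positivity
  have hQ : (0:ℝ) < q ^ ((1:ℝ)/m) := Real.rpow_pos_of_pos hq0 _
  have hR : (0:ℝ) < ((m:ℝ)+1) ^ α := Real.rpow_pos_of_pos (by positivity) _
  -- nonnegativity of the running-cost term
  have hT : ∀ y : ℝ, 0 ≤ t * (q ^ (-(1:ℝ)/m) * |(x - y)/t| ^ α * m / ((m:ℝ)+1) ^ α) := by
    intro y
    have h1 : (0:ℝ) ≤ q ^ (-(1:ℝ)/m) := (Real.rpow_pos_of_pos hq0 _).le
    positivity
  -- monotonicity: for y ≤ 0 < x, cost at y dominates cost at 0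
  have hmono : ∀ y : ℝ, y ≤ 0 → 0 < x →
      t * (q ^ (-(1:ℝ)/m) * |x/t| ^ α * m / ((m:ℝ)+1) ^ α)
        ≤ t * (q ^ (-(1:ℝ)/m) * |(x - y)/t| ^ α * m / ((m:ℝ)+1) ^ α) := by
    intro y hy hx
    have h1 : (0:ℝ) ≤ q ^ (-(1:ℝ)/m) := (Real.rpow_pos_of_pos hq0 _).le
    have h2 : |x/t| ^ α ≤ |(x - y)/t| ^ α := by
      apply Real.rpow_le_rpow (abs_nonneg _) _ hα_pos.le
      rw [abs_of_pos (by positivity), abs_of_pos (div_pos (by linarith) ht)]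
      gcongr
      linarith
    gcongr
  by_cases hx : x ≤ 0
  · -- value is a, attained at y = x
    rw [if_pos hx]
    constructor
    · rintro v ⟨y, rfl⟩
      simp only
      have := hT y
      by_cases hy : y ≤ 0
      · rw [if_pos hy]; linarith
      · rw [if_neg hy]; linarith
    · intro w hw
      apply hw
      refine ⟨x, ?_⟩
      simp only [sub_self, zero_div, abs_zero, if_pos hx,
        Real.zero_rpow hα_pos.ne']
      ring
  · rw [if_neg hx]
    push_neg at hx
    have hkey := key_eq q hq0 m hm x t hx ht
    set E : ℝ := ((m : ℝ) / (q ^ ((1:ℝ)/m) * ((m:ℝ)+1) ^ α)) * (x ^ (m+1) / t) ^ ((1:ℝ)/m)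
      with hEdef
    set P : ℝ := (x ^ (m+1) / t) ^ ((1:ℝ)/m) with hPdef
    have hiff : P ≤ (b - a) * q ^ ((1:ℝ)/m) * ((m:ℝ)+1) ^ α / m ↔ E ≤ b - a := by
      rw [le_div_iff₀ hm0, hEdef, div_mul_eq_mul_div, div_le_iff₀ (by positivity)]
      constructor <;> intro h <;> nlinarith
    by_cases hc : P ≤ (b - a) * q ^ ((1:ℝ)/m) * ((m:ℝ)+1) ^ α / m
    · rw [if_pos hc]
      have hEba : E ≤ b - a := hiff.mp hc
      constructor
      · rintro v ⟨y, rfl⟩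
        simp only
        by_cases hy : y ≤ 0
        · rw [if_pos hy]
          have := hmono y hy hx
          rw [hkey] at this
          linarith
        · rw [if_neg hy]
          have := hT y
          linarith
      · intro w hw
        apply hw
        refine ⟨0, ?_⟩
        simp only [sub_zero]
        rw [if_pos le_rfl, hkey]
    · rw [if_neg hc]
      have hEba : b - a < E := by
        by_contra h
        exact hc (hiff.mpr (by linarith))
      constructor
      · rintro v ⟨y, rfl⟩
        simp only
        by_cases hy : y ≤ 0
        · rw [if_pos hy]
          have := hmono y hy hx
          rw [hkey] at this
          linarith
        · rw [if_neg hy]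
          have := hT y
          linarith
      · intro w hw
        apply hw
        refine ⟨x, ?_⟩
        simp only [sub_self, zero_div, abs_zero, if_neg (not_le.mpr hx),
          Real.zero_rpow hα_pos.ne']
        ring
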